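/- Let $V$ and $W$ be vectors in $\mathbb{R}^n$ with $n \geq 2$, $\mathrm{Ric}$ a symmetric 2-tensor, $R = \sum_a \mathrm{Ric}_{aa}$ its trace, and $R_{cadb}$ a 4-tensor satisfying the symmetries of the Riemann curvature tensor with $\sum_c R_{cacb} = \mathrm{Ric}_{ab}$. Then, with $m = n/2$, $\int_{S^{n-1}} \Bigl(-\frac{m(m+1)}{3} V^a W^b \mathrm{Ric}_{cd}\,\xi_a\xi_b\xi_c\xi_d + \frac{2m}{3} V^a W^b \xi_c(\xi_a \mathrm{Ric}_{bc} + \xi_b \mathrm{Ric}_{ac} - R_{cadb}\xi_d)\Bigr) d\xi = \frac{v_{n-1}}{6}\bigl(\mathrm{Ric}_{ab} - \tfrac{1}{2} R\, \delta_{ab}\bigr) V^a W^b$, i.e. the spherical integral of this symbol equals $\frac{v_{n-1}}{6} G(V,W)$ where $G$ is the Einstein tensor. -/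

import Mathlib

open MeasureTheory Metric Finset

/-- The standard surface measure on the unit sphere `S^{n-1} ⊂ ℝ^n`. -/
noncomputable def sphereMeasure (n : ℕ) :
    Measure (sphere (0 : EuclideanSpace ℝ (Fin n)) 1) :=
  (volume : Measure (EuclideanSpace ℝ (Fin n))).toSphere

/-- The total volume `v_{n-1}` of the unit sphere. -/
noncomputable def sphereVolume (n : ℕ) : ℝ :=
  (sphereMeasure n Set.univ).toReal

open Real Set
open scoped NNReal ENNReal

instance (n : ℕ) : IsFiniteMeasure (sphereMeasure n) := by
  unfold sphereMeasure; infer_instance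





noncomputable def gJ (k : ℕ) : ℝ := ∫ t : ℝ, t ^ k * Real.exp (-t ^ 2)
noncomputable def gI (p : ℕ) : ℝ := ∫ r in Ioi (0:ℝ), r ^ p * Real.exp (-r ^ 2)

lemma gI_eq (p : ℕ) : gI p = (1 / 2) * Real.Gamma ((p + 1) / 2) := by
  rw [gI, ← integral_rpow_mul_exp_neg_rpow (p := 2) (q := p) (by norm_num)
    (neg_one_lt_zero.trans_le (Nat.cast_nonneg p))]
  refine setIntegral_congr_fun measurableSet_Ioi (fun x hx => ?_)
  rw [← Real.rpow_natCast x p, ← Real.rpow_two]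

lemma gI_pos (p : ℕ) : 0 < gI p := by
  rw [gI_eq]
  have := Real.Gamma_pos_of_pos (show (0:ℝ) < ((p : ℝ) + 1) / 2 by positivity)
  linarith

lemma gJ_even (j : ℕ) : gJ (2 * j) = Real.Gamma ((j : ℝ) + 1 / 2) := by
  have h : ∀ t : ℝ, |t| ^ (2 * j) * Real.exp (-|t| ^ 2) = t ^ (2 * j) * Real.exp (-t ^ 2) := by
    intro t
    rw [pow_mul, sq_abs, ← pow_mul]
  have := integral_comp_abs (f := fun x : ℝ => x ^ (2 * j) * Real.exp (-x ^ 2))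
  simp only [h] at this
  rw [gJ, this, ← gI, gI_eq]
  rw [show (((2 * j : ℕ) : ℝ) + 1) / 2 = (j : ℝ) + 1 / 2 by push_cast; ring]
  ring

lemma gJ_odd (j : ℕ) : gJ (2 * j + 1) = 0 := by
  have h : ∀ t : ℝ, (-t) ^ (2 * j + 1) * Real.exp (-(-t) ^ 2)
      = -(t ^ (2 * j + 1) * Real.exp (-t ^ 2)) := by
    intro t
    rw [Odd.neg_pow ⟨j, by ring⟩, neg_sq, neg_mul]
  have h2 := integral_neg_eq_self (fun t : ℝ => t ^ (2 * j + 1) * Real.exp (-t ^ 2)) volume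
  simp only [h, integral_neg] at h2
  have : gJ (2 * j + 1) = - gJ (2 * j + 1) := h2.symm
  linarith

lemma gJ1 : gJ 1 = 0 := by simpa using gJ_odd 0
lemma gJ3 : gJ 3 = 0 := by simpa using gJ_odd 1

lemma gJ0_eq : gJ 0 = Real.Gamma (1 / 2) := by simpa using gJ_even 0

lemma gJ0_pos : 0 < gJ 0 := by
  rw [gJ0_eq]
  exact Real.Gamma_pos_of_pos (by norm_num)

lemma gJ2 : gJ 2 = 1 / 2 * gJ 0 := by
  have h := gJ_even 1
  rw [show ((1:ℕ) : ℝ) + 1 / 2 = 1 / 2 + 1 by norm_num, Real.Gamma_add_one (by norm_num)] at h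
  rw [show (2:ℕ) = 2 * 1 from rfl, h, gJ0_eq]

lemma gJ4 : gJ 4 = 3 / 4 * gJ 0 := by
  have h := gJ_even 2
  rw [show ((2:ℕ) : ℝ) + 1 / 2 = 3 / 2 + 1 by norm_num, Real.Gamma_add_one (by norm_num),
    show (3:ℝ)/2 = 1/2 + 1 by norm_num, Real.Gamma_add_one (by norm_num)] at h
  rw [show (4:ℕ) = 2 * 2 from rfl, h, gJ0_eq]
  ring

lemma gI_succ2 (p : ℕ) : gI (p + 2) = ((p : ℝ) + 1) / 2 * gI p := by
  rw [gI_eq, gI_eq]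
  rw [show (((p + 2 : ℕ) : ℝ) + 1) / 2 = ((p : ℝ) + 1) / 2 + 1 by push_cast; ring,
    Real.Gamma_add_one (by positivity)]
  ring

lemma prodJ_single {n : ℕ} (a : Fin n) (p : ℕ) :
    ∏ i, gJ (if i = a then p else 0) = gJ p * gJ 0 ^ (n - 1) := by
  rw [← Finset.mul_prod_erase univ _ (mem_univ a), if_pos rfl]
  congr 1
  rw [Finset.prod_congr rfl (fun i hi => by
    rw [if_neg (Finset.ne_of_mem_erase hi)]), Finset.prod_const,
    Finset.card_erase_of_mem (mem_univ a), Finset.card_univ, Fintype.card_fin]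

lemma prodJ_pair {n : ℕ} (a b : Fin n) (hab : a ≠ b) (p q : ℕ) :
    ∏ i, gJ ((if i = a then p else 0) + (if i = b then q else 0))
      = gJ p * gJ q * gJ 0 ^ (n - 2) := by
  rw [← Finset.mul_prod_erase univ _ (mem_univ a), if_pos rfl, if_neg hab, add_zero]
  rw [← Finset.mul_prod_erase (univ.erase a) _
    (Finset.mem_erase.2 ⟨fun h => hab h.symm, mem_univ b⟩), if_pos rfl,
    if_neg (show b ≠ a from fun h => hab h.symm), zero_add]
  rw [Finset.prod_congr rfl (fun i hi => by
    rw [if_neg (Finset.ne_of_mem_erase (Finset.mem_of_mem_erase hi)),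
      if_neg (Finset.ne_of_mem_erase hi), add_zero]), Finset.prod_const,
    Finset.card_erase_of_mem (Finset.mem_erase.2 ⟨fun h => hab h.symm, mem_univ b⟩),
    Finset.card_erase_of_mem (mem_univ a), Finset.card_univ, Fintype.card_fin,
    Nat.sub_sub, mul_assoc]

lemma gJ_integrable (k : ℕ) : Integrable (fun t : ℝ => t ^ k * Real.exp (-t ^ 2)) := by
  have := integrable_rpow_mul_exp_neg_mul_sq (b := 1) one_pos (s := k)
    (neg_one_lt_zero.trans_le (Nat.cast_nonneg k))
  simpa [Real.rpow_natCast] using this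

lemma master (n : ℕ) (hn : 0 < n) (k : Fin n → ℕ) :
    (∫ ξ : sphere (0 : EuclideanSpace ℝ (Fin n)) 1,
        ∏ i, ((ξ : EuclideanSpace ℝ (Fin n)) i) ^ (k i) ∂ sphereMeasure n)
      * gI (n - 1 + ∑ i, k i) = ∏ i, gJ (k i) := by
  classical
  set E := EuclideanSpace ℝ (Fin n)
  have hdim : Module.finrank ℝ E = n := by simp [E]
  set f : E → ℝ := fun x => (∏ i, (x i) ^ (k i)) * Real.exp (-‖x‖ ^ 2) with hf
  have hnsq : ∀ x : E, ‖x‖ ^ 2 = ∑ i, (x i) ^ 2 := by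
    intro x
    rw [EuclideanSpace.norm_eq, Real.sq_sqrt (by positivity)]
    simp [sq_abs]
  have hf_eq : f = (fun y : Fin n → ℝ => ∏ i, (y i ^ k i * Real.exp (-(y i) ^ 2))) ∘
      ((MeasurableEquiv.toLp 2 (Fin n → ℝ)).symm) := by
    funext x
    show (∏ i, (x i) ^ (k i)) * Real.exp (-‖x‖ ^ 2)
      = ∏ i, (x i ^ k i * Real.exp (-(x i) ^ 2))
    rw [Finset.prod_mul_distrib, ← Real.exp_sum, hnsq x, ← Finset.sum_neg_distrib]
  have hPi : Integrable (fun y : Fin n → ℝ => ∏ i, (y i ^ k i * Real.exp (-(y i) ^ 2))) :=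
    Integrable.fintype_prod (f := fun i (t : ℝ) => t ^ k i * Real.exp (-t ^ 2))
      (fun i => gJ_integrable (k i))
  have hf_int : Integrable f volume := by
    rw [hf_eq]
    exact ((EuclideanSpace.volume_preserving_symm_measurableEquiv_toLp (Fin n)).integrable_comp_emb
      ((MeasurableEquiv.toLp 2 (Fin n → ℝ)).symm).measurableEmbedding).2 hPi
  haveI : Nonempty (Fin n) := ⟨⟨0, hn⟩⟩
  haveI : Nontrivial E := inferInstance
  have h1 : ∫ x : E, f x = ∏ i, gJ (k i) := by
    rw [hf_eq]
    have key := (EuclideanSpace.volume_preserving_symm_measurableEquiv_toLp (Fin n)).integral_comp'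
      (g := fun y : Fin n → ℝ => ∏ i, (y i ^ k i * Real.exp (-(y i) ^ 2)))
    have key2 : ∫ y : Fin n → ℝ, ∏ i, (y i ^ k i * Real.exp (-(y i) ^ 2))
        = ∏ i, gJ (k i) := by
      rw [MeasureTheory.volume_pi, MeasureTheory.integral_fintype_prod_eq_prod
        (f := fun i (t : ℝ) => t ^ k i * Real.exp (-t ^ 2))]
      rfl
    exact key.trans key2
  -- polar side
  have hcomap : Integrable (fun x : ({(0:E)}ᶜ : Set E) => f x)
      ((volume : Measure E).comap (↑)) := by
    have hmap : Measure.map (Subtype.val : ({(0:E)}ᶜ : Set E) → E)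
        ((volume : Measure E).comap Subtype.val) = (volume : Measure E).restrict {(0:E)}ᶜ :=
      map_comap_subtype_coe (measurableSet_singleton (0:E)).compl _
    have := (MeasurableEmbedding.subtype_coe (measurableSet_singleton (0:E)).compl).integrable_map_iff
      (g := f) (μ := (volume : Measure E).comap Subtype.val)
    rw [hmap] at this
    exact this.1 hf_int.integrableOn
  have hphi : ∀ x : ({(0:E)}ᶜ : Set E),
      f ((((homeomorphUnitSphereProd E) x).2 : ℝ) • (((homeomorphUnitSphereProd E) x).1 : E))
        = f x := by
    intro x
    have hx : (x : E) ≠ 0 := x.2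
    rw [homeomorphUnitSphereProd_apply_snd_coe, homeomorphUnitSphereProd_apply_fst_coe,
      smul_inv_smul₀ (norm_ne_zero_iff.2 hx)]
  have hprod_int : Integrable (fun p : sphere (0:E) 1 × Ioi (0:ℝ) => f ((p.2 : ℝ) • (p.1 : E)))
      ((volume : Measure E).toSphere.prod (Measure.volumeIoiPow (Module.finrank ℝ E - 1))) := by
    rw [← (volume : Measure E).measurePreserving_homeomorphUnitSphereProd.integrable_comp_emb
      (Homeomorph.measurableEmbedding _)]
    exact hcomap.congr (ae_of_all _ fun x => (hphi x).symm)
  have h2 : ∫ x : E, f x =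
      ∫ p : sphere (0:E) 1 × Ioi (0:ℝ), f ((p.2 : ℝ) • (p.1 : E))
        ∂((volume : Measure E).toSphere.prod (Measure.volumeIoiPow (Module.finrank ℝ E - 1))) := by
    have e1 : ∫ x : E, f x = ∫ x : ({(0:E)}ᶜ : Set E), f x ∂((volume : Measure E).comap (↑)) := by
      rw [integral_subtype_comap (measurableSet_singleton (0:E)).compl f,
        restrict_compl_singleton]
    rw [e1, ← (volume : Measure E).measurePreserving_homeomorphUnitSphereProd.integral_comp
      (Homeomorph.measurableEmbedding _) (fun p => f ((p.2 : ℝ) • (p.1 : E)))]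
    exact integral_congr_ae (ae_of_all _ fun x => (hphi x).symm)
  have h3 : (∫ p : sphere (0:E) 1 × Ioi (0:ℝ), f ((p.2 : ℝ) • (p.1 : E))
        ∂((volume : Measure E).toSphere.prod (Measure.volumeIoiPow (Module.finrank ℝ E - 1))))
      = ∫ ξ : sphere (0:E) 1, (∫ r : Ioi (0:ℝ), f ((r:ℝ) • (ξ:E))
          ∂(Measure.volumeIoiPow (Module.finrank ℝ E - 1))) ∂((volume : Measure E).toSphere) :=
    integral_prod _ hprod_int
  have hinner : ∀ ξ : sphere (0:E) 1,
      (∫ r : Ioi (0:ℝ), f ((r:ℝ) • (ξ:E)) ∂(Measure.volumeIoiPow (Module.finrank ℝ E - 1)))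
        = (∏ i, ((ξ:E) i) ^ k i) * gI (n - 1 + ∑ i, k i) := by
    intro ξ
    rw [hdim, Measure.volumeIoiPow]
    simp only [ENNReal.ofReal]
    rw [integral_withDensity_eq_integral_smul
      ((measurable_subtype_coe.pow_const _).real_toNNReal) _]
    rw [integral_subtype_comap (s := Ioi (0:ℝ)) measurableSet_Ioi
      (fun r : ℝ => ((r ^ (n-1)).toNNReal : ℝ≥0) • f (r • (ξ:E)))]
    have hcong : ∀ r ∈ Ioi (0:ℝ), ((r ^ (n-1)).toNNReal : ℝ≥0) • f ((r:ℝ) • (ξ:E))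
        = (∏ i, ((ξ:E) i) ^ k i) * (r ^ (n - 1 + ∑ i, k i) * Real.exp (-r ^ 2)) := by
      intro r hr
      have hr0 : (0:ℝ) < r := hr
      have hnorm : ‖(r:ℝ) • (ξ:E)‖ = r := by
        rw [norm_smul, mem_sphere_zero_iff_norm.mp ξ.2, mul_one, Real.norm_eq_abs,
          abs_of_pos hr0]
      have happ : ∀ i, ((r:ℝ) • (ξ:E)) i = r * (ξ:E) i := fun i => rfl
      simp only [hf, happ, hnorm, mul_pow, NNReal.smul_def,
        Real.coe_toNNReal _ (by positivity : (0:ℝ) ≤ r ^ (n-1)), smul_eq_mul]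
      rw [Finset.prod_mul_distrib, Finset.prod_pow_eq_pow_sum, pow_add]
      ring
    rw [setIntegral_congr_fun measurableSet_Ioi hcong, integral_const_mul, ← gI]
  rw [show sphereMeasure n = (volume : Measure E).toSphere from rfl]
  rw [← integral_mul_const]
  rw [show (∫ ξ : sphere (0:E) 1, (∏ i, ((ξ:E) i) ^ k i) * gI (n - 1 + ∑ i, k i)
      ∂((volume : Measure E).toSphere))
    = ∫ ξ : sphere (0:E) 1, (∫ r : Ioi (0:ℝ), f ((r:ℝ) • (ξ:E))
        ∂(Measure.volumeIoiPow (Module.finrank ℝ E - 1))) ∂((volume : Measure E).toSphere) from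
    integral_congr_ae (ae_of_all _ fun ξ => (hinner ξ).symm)]
  rw [← h3, ← h2, h1]

lemma volume_master (n : ℕ) (hn : 0 < n) :
    sphereVolume n * gI (n - 1) = gJ 0 ^ n := by
  have h := master n hn (fun _ => 0)
  simp only [pow_zero, Finset.prod_const_one, Finset.sum_const_zero, add_zero,
    Finset.prod_const, Finset.card_univ, Fintype.card_fin] at h
  rw [integral_const] at h
  simpa [sphereVolume, smul_eq_mul, Measure.real] using h

lemma cast_pred_add_one {n : ℕ} (hn : 0 < n) : ((n - 1 : ℕ) : ℝ) + 1 = (n : ℝ) := by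
  have h : (n - 1) + 1 = n := Nat.succ_pred_eq_of_pos hn
  exact_mod_cast congrArg (Nat.cast : ℕ → ℝ) h

lemma pow_split1 {n : ℕ} (hn : 0 < n) (x : ℝ) : x ^ n = x * x ^ (n - 1) := by
  conv_lhs => rw [show n = 1 + (n - 1) by omega]
  rw [pow_add, pow_one]

lemma pow_split2 {n : ℕ} (hn : 2 ≤ n) (x : ℝ) : x ^ n = x * x * x ^ (n - 2) := by
  conv_lhs => rw [show n = 2 + (n - 2) by omega]
  rw [pow_add]
  ring

lemma moment2 (n : ℕ) (hn : 0 < n) (a b : Fin n) :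
    (∫ ξ : sphere (0 : EuclideanSpace ℝ (Fin n)) 1,
      (ξ : EuclideanSpace ℝ (Fin n)) a * (ξ : EuclideanSpace ℝ (Fin n)) b ∂ sphereMeasure n)
    = (if a = b then 1 else 0) * (sphereVolume n / n) := by
  classical
  set k : Fin n → ℕ := fun i => (if i = a then 1 else 0) + (if i = b then 1 else 0) with hk
  have hsum : ∑ i, k i = 2 := by
    simp [hk, Finset.sum_add_distrib]
  have hprod : ∀ ξ : sphere (0 : EuclideanSpace ℝ (Fin n)) 1,
      ∏ i, ((ξ : EuclideanSpace ℝ (Fin n)) i) ^ (k i)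
        = (ξ : EuclideanSpace ℝ (Fin n)) a * (ξ : EuclideanSpace ℝ (Fin n)) b := by
    intro ξ
    simp only [hk, pow_add, pow_ite, pow_one, pow_zero]
    rw [Finset.prod_mul_distrib, Finset.prod_ite_eq' univ a, Finset.prod_ite_eq' univ b]
    simp
  have hM := master n hn k
  rw [hsum, integral_congr_ae (ae_of_all _ fun ξ => hprod ξ)] at hM
  by_cases hab : a = b
  · subst hab
    have hkk : ∀ i, k i = if i = a then 2 else 0 := fun i => by
      by_cases h : i = a <;> simp [hk, h]
    rw [Finset.prod_congr rfl (fun i _ => by rw [hkk i]), prodJ_single, gJ2] at hM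
    have hs2 : gI (n - 1 + 2) = (n : ℝ) / 2 * gI (n - 1) := by
      rw [gI_succ2, cast_pred_add_one hn]
    have hn0 : (n : ℝ) ≠ 0 := Nat.cast_ne_zero.2 hn.ne'
    have hkey : (sphereVolume n / n) * gI (n - 1 + 2) = 1 / 2 * gJ 0 * gJ 0 ^ (n - 1) := by
      rw [hs2]
      calc sphereVolume n / n * ((n : ℝ) / 2 * gI (n - 1))
          = sphereVolume n * gI (n - 1) / 2 := by field_simp
        _ = gJ 0 ^ n / 2 := by rw [volume_master n hn]
        _ = 1 / 2 * gJ 0 * gJ 0 ^ (n - 1) := by rw [pow_split1 hn]; ring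
    rw [if_pos rfl, one_mul]
    exact mul_right_cancel₀ (ne_of_gt (gI_pos _)) (hM.trans hkey.symm)
  · rw [if_neg hab, zero_mul]
    have hz : ∏ i, gJ (k i) = 0 := by
      refine Finset.prod_eq_zero (mem_univ a) ?_
      have : k a = 1 := by simp [hk, hab]
      rw [this, gJ1]
    exact (mul_eq_zero.mp (hM.trans hz)).resolve_right (ne_of_gt (gI_pos _))

lemma moment4 (n : ℕ) (hn : 0 < n) (a b c d : Fin n) :
    (∫ ξ : sphere (0 : EuclideanSpace ℝ (Fin n)) 1,
      (ξ : EuclideanSpace ℝ (Fin n)) a * (ξ : EuclideanSpace ℝ (Fin n)) b *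
      (ξ : EuclideanSpace ℝ (Fin n)) c * (ξ : EuclideanSpace ℝ (Fin n)) d ∂ sphereMeasure n)
    = ((if a = b then (1:ℝ) else 0) * (if c = d then 1 else 0)
       + (if a = c then 1 else 0) * (if b = d then 1 else 0)
       + (if a = d then 1 else 0) * (if b = c then 1 else 0))
      * (sphereVolume n / (n * (n + 2))) := by
  classical
  set k : Fin n → ℕ := fun i => (if i = a then 1 else 0) + (if i = b then 1 else 0)
    + (if i = c then 1 else 0) + (if i = d then 1 else 0) with hk
  have hsum : ∑ i, k i = 4 := by simp [hk, Finset.sum_add_distrib]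
  have hprod : ∀ ξ : sphere (0 : EuclideanSpace ℝ (Fin n)) 1,
      ∏ i, ((ξ : EuclideanSpace ℝ (Fin n)) i) ^ (k i)
        = (ξ : EuclideanSpace ℝ (Fin n)) a * (ξ : EuclideanSpace ℝ (Fin n)) b *
          (ξ : EuclideanSpace ℝ (Fin n)) c * (ξ : EuclideanSpace ℝ (Fin n)) d := by
    intro ξ
    simp only [hk, pow_add, pow_ite, pow_one, pow_zero]
    rw [Finset.prod_mul_distrib, Finset.prod_mul_distrib, Finset.prod_mul_distrib,
      Finset.prod_ite_eq' univ a, Finset.prod_ite_eq' univ b, Finset.prod_ite_eq' univ c,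
      Finset.prod_ite_eq' univ d]
    simp
  have hM := master n hn k
  rw [hsum, integral_congr_ae (ae_of_all _ fun ξ => hprod ξ)] at hM
  have hs2 : gI (n - 1 + 2) = (n : ℝ) / 2 * gI (n - 1) := by rw [gI_succ2, cast_pred_add_one hn]
  have hs4 : gI (n - 1 + 4) = ((n : ℝ) + 2) / 2 * ((n : ℝ) / 2) * gI (n - 1) := by
    have h1 : gI (n - 1 + 4) = gI ((n - 1 + 2) + 2) := by norm_num
    have h2 : ((n - 1 + 2 : ℕ) : ℝ) + 1 = (n : ℝ) + 2 := by
      have := cast_pred_add_one hn; push_cast; push_cast at this; linarith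
    rw [h1, gI_succ2, hs2, h2]; ring
  have hn0 : (n:ℝ) ≠ 0 := Nat.cast_ne_zero.2 hn.ne'
  have hv := volume_master n hn
  refine mul_right_cancel₀ (ne_of_gt (gI_pos (n - 1 + 4))) (hM.trans ?_)
  have key : ∀ S : ℝ, S * (sphereVolume n / (n * (n + 2))) * gI (n - 1 + 4)
      = S * gJ 0 ^ n / 4 := by
    intro S
    rw [hs4, ← hv]
    field_simp
    ring
  rw [key]
  by_cases hab : a = b
  · subst hab
    by_cases hcd : c = d
    · subst hcd
      by_cases hac : a = c
      · subst hac
        have hkk : ∀ i, k i = if i = a then 4 else 0 := fun i => by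
          by_cases h : i = a <;> simp [hk, h]
        rw [Finset.prod_congr rfl (fun i _ => by rw [hkk i]), prodJ_single, gJ4]
        simp only [eq_self_iff_true, if_true]
        rw [pow_split1 hn]
        ring
      · have h2n : 2 ≤ n := by
          have := Fintype.one_lt_card_iff.2 ⟨a, c, hac⟩
          simp at this; omega
        have hca : ¬ c = a := fun h => hac h.symm
        have hkk : ∀ i, k i = (if i = a then 2 else 0) + (if i = c then 2 else 0) := fun i => by
          by_cases h1 : i = a <;> by_cases h2 : i = c <;>
            first
            | (exfalso; exact hac (h1.symm.trans h2))
            | simp [hk, h1, h2, hac, hca]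
        rw [Finset.prod_congr rfl (fun i _ => by rw [hkk i]), prodJ_pair a c hac, gJ2]
        simp only [eq_self_iff_true, if_true, if_neg hac, if_neg hca]
        rw [pow_split2 h2n]
        ring
    · by_cases hca : c = a
      · subst hca
        have hda : ¬ d = c := fun h => hcd h.symm
        have hz : ∏ i, gJ (k i) = 0 := Finset.prod_eq_zero (mem_univ d)
          (by rw [show k d = 1 by simp [hk, hda], gJ1])
        rw [hz]
        simp [hcd]
      · have hz : ∏ i, gJ (k i) = 0 := Finset.prod_eq_zero (mem_univ c)
          (by rw [show k c = 1 by simp [hk, hca, hcd], gJ1])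
        rw [hz]
        have hac : ¬ a = c := fun h => hca h.symm
        simp [hcd, hac]
  · by_cases hac : a = c
    · subst hac
      by_cases hbd : b = d
      · subst hbd
        have h2n : 2 ≤ n := by
          have := Fintype.one_lt_card_iff.2 ⟨a, b, hab⟩
          simp at this; omega
        have hba : ¬ b = a := fun h => hab h.symm
        have hkk : ∀ i, k i = (if i = a then 2 else 0) + (if i = b then 2 else 0) := fun i => by
          by_cases h1 : i = a <;> by_cases h2 : i = b <;>
            first
            | (exfalso; exact hab (h1.symm.trans h2))
            | simp [hk, h1, h2, hab, hba]
        rw [Finset.prod_congr rfl (fun i _ => by rw [hkk i]), prodJ_pair a b hab, gJ2]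
        simp only [eq_self_iff_true, if_true, if_neg hab, if_neg hba]
        rw [pow_split2 h2n]
        ring
      · have hba : ¬ b = a := fun h => hab h.symm
        have hz : ∏ i, gJ (k i) = 0 := Finset.prod_eq_zero (mem_univ b)
          (by rw [show k b = 1 by simp [hk, hba, hbd], gJ1])
        rw [hz]
        simp [hab, hbd, hba]
    · by_cases had : a = d
      · subst had
        by_cases hbc : b = c
        · subst hbc
          have h2n : 2 ≤ n := by
            have := Fintype.one_lt_card_iff.2 ⟨a, b, hab⟩
            simp at this; omega
          have hba : ¬ b = a := fun h => hab h.symm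
          have hkk : ∀ i, k i = (if i = a then 2 else 0) + (if i = b then 2 else 0) := fun i => by
            by_cases h1 : i = a <;> by_cases h2 : i = b <;>
              first
              | (exfalso; exact hab (h1.symm.trans h2))
              | simp [hk, h1, h2, hab, hba]
          rw [Finset.prod_congr rfl (fun i _ => by rw [hkk i]), prodJ_pair a b hab, gJ2]
          simp only [eq_self_iff_true, if_true, if_neg hab, if_neg hba]
          rw [pow_split2 h2n]
          ring
        · have hba : ¬ b = a := fun h => hab h.symm
          have hz : ∏ i, gJ (k i) = 0 := Finset.prod_eq_zero (mem_univ b)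
            (by rw [show k b = 1 by simp [hk, hba, hbc], gJ1])
          rw [hz]
          simp [hab, hac, hbc]
      · have hz : ∏ i, gJ (k i) = 0 := Finset.prod_eq_zero (mem_univ a)
          (by rw [show k a = 1 by simp [hk, hab, hac, had], gJ1])
        rw [hz]
        simp [hab, hac, had]


lemma sum_guard {α : Type*} [Fintype α] (P : Prop) [Decidable P] (f : α → ℝ) :
    ∑ x : α, (if P then f x else 0) = if P then ∑ x, f x else 0 := by
  split_ifs <;> simp

lemma sum4_delta (n : ℕ) (V W : Fin n → ℝ) (Ric : Fin n → Fin n → ℝ) (K : ℝ) :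
    ∑ a, ∑ b, ∑ c, ∑ d, V a * W b * Ric c d *
      (((if a = b then (1:ℝ) else 0) * (if c = d then 1 else 0)
        + (if a = c then 1 else 0) * (if b = d then 1 else 0)
        + (if a = d then 1 else 0) * (if b = c then 1 else 0)) * K)
    = ((∑ a, V a * W a) * (∑ c, Ric c c)
        + (∑ a, ∑ b, V a * W b * Ric a b)
        + (∑ a, ∑ b, V a * W b * Ric b a)) * K := by
  have step1 : ∀ a b : Fin n, ∑ c, ∑ d, V a * W b * Ric c d *
      (((if a = b then (1:ℝ) else 0) * (if c = d then 1 else 0)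
        + (if a = c then 1 else 0) * (if b = d then 1 else 0)
        + (if a = d then 1 else 0) * (if b = c then 1 else 0)) * K)
      = (if a = b then V a * W b * (∑ c, Ric c c) * K else 0)
        + V a * W b * Ric a b * K + V a * W b * Ric b a * K := by
    intro a b
    have inner : ∀ c : Fin n, ∑ d, V a * W b * Ric c d *
        (((if a = b then (1:ℝ) else 0) * (if c = d then 1 else 0)
          + (if a = c then 1 else 0) * (if b = d then 1 else 0)
          + (if a = d then 1 else 0) * (if b = c then 1 else 0)) * K)
        = (if a = b then V a * W b * Ric c c * K else 0)
          + (if a = c then V a * W b * Ric c b * K else 0)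
          + (if b = c then V a * W b * Ric c a * K else 0) := by
      intro c
      simp only [mul_add, add_mul, Finset.sum_add_distrib, mul_ite, ite_mul, mul_zero,
        zero_mul, mul_one, one_mul, Finset.sum_ite_eq, Finset.sum_ite_eq', sum_guard,
        Finset.mem_univ, if_true]
    rw [Finset.sum_congr rfl fun c _ => inner c]
    simp only [Finset.sum_add_distrib, sum_guard, Finset.sum_ite_eq, Finset.sum_ite_eq',
      Finset.mem_univ, if_true, Finset.mul_sum, Finset.sum_mul]
  rw [Finset.sum_congr rfl fun a _ => Finset.sum_congr rfl fun b _ => step1 a b]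
  simp only [Finset.sum_add_distrib, sum_guard, Finset.sum_ite_eq, Finset.sum_ite_eq',
    Finset.mem_univ, if_true, add_mul, Finset.sum_mul, Finset.mul_sum]
  congr 1
  congr 1
  exact Finset.sum_comm



section swap
variable {X : Type*} [MeasurableSpace X] (μ : Measure X)

lemma swap3 {n : ℕ} (F : Fin n → Fin n → Fin n → X → ℝ)
    (hF : ∀ a b c, Integrable (F a b c) μ) :
    ∫ x, ∑ a, ∑ b, ∑ c, F a b c x ∂μ = ∑ a, ∑ b, ∑ c, ∫ x, F a b c x ∂μ := by
  rw [integral_finset_sum _ (fun a _ => integrable_finset_sum _ (fun b _ =>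
    integrable_finset_sum _ (fun c _ => hF a b c)))]
  refine Finset.sum_congr rfl fun a _ => ?_
  rw [integral_finset_sum _ (fun b _ => integrable_finset_sum _ (fun c _ => hF a b c))]
  exact Finset.sum_congr rfl fun b _ => integral_finset_sum _ (fun c _ => hF a b c)

lemma swap4 {n : ℕ} (F : Fin n → Fin n → Fin n → Fin n → X → ℝ)
    (hF : ∀ a b c d, Integrable (F a b c d) μ) :
    ∫ x, ∑ a, ∑ b, ∑ c, ∑ d, F a b c d x ∂μ
      = ∑ a, ∑ b, ∑ c, ∑ d, ∫ x, F a b c d x ∂μ := by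
  rw [swap3 μ (fun a b c x => ∑ d, F a b c d x)
    (fun a b c => integrable_finset_sum _ (fun d _ => hF a b c d))]
  exact Finset.sum_congr rfl fun a _ => Finset.sum_congr rfl fun b _ => Finset.sum_congr rfl
    fun c _ => integral_finset_sum _ (fun d _ => hF a b c d)

end swap

lemma coord_continuous {n : ℕ} (a : Fin n) :
    Continuous (fun ξ : sphere (0 : EuclideanSpace ℝ (Fin n)) 1 =>
      (ξ : EuclideanSpace ℝ (Fin n)) a) :=
  (continuous_apply a).comp (by fun_prop)

lemma sphere_integrable {n : ℕ} {f : sphere (0 : EuclideanSpace ℝ (Fin n)) 1 → ℝ}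
    (hf : Continuous f) : Integrable f (sphereMeasure n) :=
  hf.integrable_of_hasCompactSupport
    (IsCompact.of_isClosed_subset isCompact_univ (isClosed_tsupport f) (Set.subset_univ _))

/-- the spherical integral of the order `-2m` symbol of `VW Δ^{-m}`
yields the Einstein tensor density:
`∫_{S^{n-1}} ( -m(m+1)/3 V^a W^b Ric_{cd} ξ_a ξ_b ξ_c ξ_d
   + 2m/3 V^a W^b ξ_c (ξ_a Ric_{bc} + ξ_b Ric_{ac} - R_{cadb} ξ_d) ) dξ
 = v_{n-1}/6 (Ric_{ab} - ½ R δ_{ab}) V^a W^b`. -/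
theorem einstein_symbol_sphere_integral (m : ℕ) (hm : 1 ≤ m)
    (V W : Fin (2 * m) → ℝ)
    (Ric : Fin (2 * m) → Fin (2 * m) → ℝ)
    (Rm : Fin (2 * m) → Fin (2 * m) → Fin (2 * m) → Fin (2 * m) → ℝ)
    (hRicSym : ∀ a b, Ric a b = Ric b a)
    (hRmAnti1 : ∀ a b c d, Rm a b c d = - Rm b a c d)
    (hRmAnti2 : ∀ a b c d, Rm a b c d = - Rm a b d c)
    (hRmPair : ∀ c a d b, Rm c a d b = Rm d b c a)
    (hRmContr : ∀ a b, ∑ c, Rm c a c b = Ric a b) :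
    (∫ ξ : sphere (0 : EuclideanSpace ℝ (Fin (2 * m))) 1,
        (-(m * (m + 1) : ℝ) / 3) *
          (∑ a, ∑ b, ∑ c, ∑ d, V a * W b * Ric c d *
            (ξ : EuclideanSpace ℝ (Fin (2 * m))) a *
            (ξ : EuclideanSpace ℝ (Fin (2 * m))) b *
            (ξ : EuclideanSpace ℝ (Fin (2 * m))) c *
            (ξ : EuclideanSpace ℝ (Fin (2 * m))) d)
        + (2 * (m : ℝ) / 3) *
          ((∑ a, ∑ b, ∑ c, V a * W b * (ξ : EuclideanSpace ℝ (Fin (2 * m))) c *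
              ((ξ : EuclideanSpace ℝ (Fin (2 * m))) a * Ric b c +
                (ξ : EuclideanSpace ℝ (Fin (2 * m))) b * Ric a c))
            - ∑ a, ∑ b, ∑ c, ∑ d, V a * W b *
                (ξ : EuclideanSpace ℝ (Fin (2 * m))) c * Rm c a d b *
                (ξ : EuclideanSpace ℝ (Fin (2 * m))) d)
        ∂(sphereMeasure (2 * m)))
      = sphereVolume (2 * m) / 6 *
          ∑ a, ∑ b, (Ric a b - 1 / 2 * (∑ c, Ric c c) * (if a = b then 1 else 0))
            * V a * W b := by
  classical
  have hn : 0 < 2 * m := by omega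
  set σ := sphereMeasure (2 * m)
  set v := sphereVolume (2 * m) with hv_def
  -- abbreviations
  set x : Fin (2 * m) → (sphere (0 : EuclideanSpace ℝ (Fin (2 * m))) 1) → ℝ :=
    fun a ξ => (ξ : EuclideanSpace ℝ (Fin (2 * m))) a with hx
  have hxc : ∀ a, Continuous (x a) := fun a => coord_continuous a
  -- integrable monomials
  have hint2 : ∀ a b : Fin (2 * m), Integrable (fun ξ => x a ξ * x b ξ) σ :=
    fun a b => sphere_integrable ((hxc a).mul (hxc b))
  have hint4 : ∀ a b c d : Fin (2 * m), Integrable (fun ξ => x a ξ * x b ξ * x c ξ * x d ξ) σ :=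
    fun a b c d => sphere_integrable ((((hxc a).mul (hxc b)).mul (hxc c)).mul (hxc d))
  -- the three groups
  set A : (sphere (0 : EuclideanSpace ℝ (Fin (2 * m))) 1) → ℝ :=
    fun ξ => ∑ a, ∑ b, ∑ c, ∑ d, V a * W b * Ric c d * x a ξ * x b ξ * x c ξ * x d ξ with hA_def
  set B : (sphere (0 : EuclideanSpace ℝ (Fin (2 * m))) 1) → ℝ :=
    fun ξ => ∑ a, ∑ b, ∑ c, V a * W b * x c ξ * (x a ξ * Ric b c + x b ξ * Ric a c) with hB_def
  set C : (sphere (0 : EuclideanSpace ℝ (Fin (2 * m))) 1) → ℝ :=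
    fun ξ => ∑ a, ∑ b, ∑ c, ∑ d, V a * W b * x c ξ * Rm c a d b * x d ξ with hC_def
  have hAc : Continuous A := by
    refine continuous_finset_sum _ fun a _ => continuous_finset_sum _ fun b _ =>
      continuous_finset_sum _ fun c _ => continuous_finset_sum _ fun d _ => ?_
    exact ((((continuous_const.mul (hxc a)).mul (hxc b)).mul (hxc c)).mul (hxc d))
  have hBc : Continuous B := by
    refine continuous_finset_sum _ fun a _ => continuous_finset_sum _ fun b _ =>
      continuous_finset_sum _ fun c _ => ?_
    exact (continuous_const.mul (hxc c)).mul
      (((hxc a).mul continuous_const).add ((hxc b).mul continuous_const))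
  have hCc : Continuous C := by
    refine continuous_finset_sum _ fun a _ => continuous_finset_sum _ fun b _ =>
      continuous_finset_sum _ fun c _ => continuous_finset_sum _ fun d _ => ?_
    exact (((continuous_const.mul (hxc c)).mul continuous_const).mul (hxc d))
  -- split the integral
  have hsplit : (∫ ξ, ((-(m * (m + 1) : ℝ) / 3) * A ξ + (2 * (m : ℝ) / 3) * (B ξ - C ξ)) ∂σ)
      = (-(m * (m + 1) : ℝ) / 3) * (∫ ξ, A ξ ∂σ)
        + (2 * (m : ℝ) / 3) * ((∫ ξ, B ξ ∂σ) - (∫ ξ, C ξ ∂σ)) := by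
    have hfi : Integrable (fun ξ => (-(m * (m + 1) : ℝ) / 3) * A ξ) σ :=
      (sphere_integrable hAc).const_mul _
    have hgi : Integrable (fun ξ => (2 * (m : ℝ) / 3) * (B ξ - C ξ)) σ :=
      ((sphere_integrable hBc).sub (sphere_integrable hCc)).const_mul _
    rw [integral_add hfi hgi, integral_const_mul, integral_const_mul,
      integral_sub (sphere_integrable hBc) (sphere_integrable hCc)]
  -- compute ∫ A
  have hA : (∫ ξ, A ξ ∂σ)
      = ((∑ a, V a * W a) * (∑ c, Ric c c)
        + (∑ a, ∑ b, V a * W b * Ric a b)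
        + (∑ a, ∑ b, V a * W b * Ric b a)) * (v / ((2 * m : ℕ) * ((2 * m : ℕ) + 2))) := by
    rw [hA_def]
    beta_reduce
    rw [swap4 σ (fun a b c d ξ => V a * W b * Ric c d * x a ξ * x b ξ * x c ξ * x d ξ) (fun a b c d => sphere_integrable
      ((((continuous_const.mul (hxc a)).mul (hxc b)).mul (hxc c)).mul (hxc d)))]
    rw [← sum4_delta (2 * m) V W Ric (v / ((2 * m : ℕ) * ((2 * m : ℕ) + 2)))]
    refine Finset.sum_congr rfl fun a _ => Finset.sum_congr rfl fun b _ =>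
      Finset.sum_congr rfl fun c _ => Finset.sum_congr rfl fun d _ => ?_
    have : (fun ξ => V a * W b * Ric c d * x a ξ * x b ξ * x c ξ * x d ξ)
        = fun ξ => (V a * W b * Ric c d) * (x a ξ * x b ξ * x c ξ * x d ξ) :=
      funext fun ξ => by ring
    rw [this, integral_const_mul, moment4 (2 * m) hn a b c d]
  -- compute ∫ B
  have hB : (∫ ξ, B ξ ∂σ)
      = ((∑ a, ∑ b, V a * W b * Ric b a) + (∑ a, ∑ b, V a * W b * Ric a b)) * (v / (2 * m : ℕ)) := by
    rw [hB_def]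
    beta_reduce
    rw [swap3 σ (fun a b c ξ => V a * W b * x c ξ * (x a ξ * Ric b c + x b ξ * Ric a c)) (fun a b c => sphere_integrable
      ((continuous_const.mul (hxc c)).mul
        (((hxc a).mul continuous_const).add ((hxc b).mul continuous_const))))]
    have step : ∀ a b c : Fin (2 * m),
        (∫ ξ, V a * W b * x c ξ * (x a ξ * Ric b c + x b ξ * Ric a c) ∂σ)
        = V a * W b * Ric b c * ((if c = a then (1:ℝ) else 0) * (v / (2 * m : ℕ)))
          + V a * W b * Ric a c * ((if c = b then (1:ℝ) else 0) * (v / (2 * m : ℕ))) := by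
      intro a b c
      have : (fun ξ => V a * W b * x c ξ * (x a ξ * Ric b c + x b ξ * Ric a c))
          = fun ξ => (V a * W b * Ric b c) * (x c ξ * x a ξ)
              + (V a * W b * Ric a c) * (x c ξ * x b ξ) := funext fun ξ => by ring
      rw [this, integral_add ((hint2 c a).const_mul _) ((hint2 c b).const_mul _),
        integral_const_mul, integral_const_mul, moment2 (2 * m) hn c a, moment2 (2 * m) hn c b, mul_assoc,
        mul_assoc]
    rw [Finset.sum_congr rfl fun a _ => Finset.sum_congr rfl fun b _ =>
      Finset.sum_congr rfl fun c _ => step a b c]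
    simp only [Finset.sum_add_distrib, mul_ite, ite_mul, mul_zero, zero_mul, mul_one, one_mul,
      sum_guard, Finset.sum_ite_eq, Finset.sum_ite_eq', Finset.mem_univ, if_true, add_mul,
      Finset.sum_mul]
  -- compute ∫ C
  have hC : (∫ ξ, C ξ ∂σ) = (∑ a, ∑ b, V a * W b * Ric a b) * (v / (2 * m : ℕ)) := by
    rw [hC_def]
    beta_reduce
    rw [swap4 σ (fun a b c d ξ => V a * W b * x c ξ * Rm c a d b * x d ξ) (fun a b c d => sphere_integrable
      ((((continuous_const.mul (hxc c)).mul continuous_const).mul (hxc d))))]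
    have step : ∀ a b c d : Fin (2 * m),
        (∫ ξ, V a * W b * x c ξ * Rm c a d b * x d ξ ∂σ)
        = V a * W b * Rm c a d b * ((if c = d then (1:ℝ) else 0) * (v / (2 * m : ℕ))) := by
      intro a b c d
      have : (fun ξ => V a * W b * x c ξ * Rm c a d b * x d ξ)
          = fun ξ => (V a * W b * Rm c a d b) * (x c ξ * x d ξ) := funext fun ξ => by ring
      rw [this, integral_const_mul, moment2 (2 * m) hn c d]
    rw [Finset.sum_congr rfl fun a _ => Finset.sum_congr rfl fun b _ =>
      Finset.sum_congr rfl fun c _ => Finset.sum_congr rfl fun d _ => step a b c d]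
    have inner : ∀ a b : Fin (2 * m),
        ∑ c, ∑ d, V a * W b * Rm c a d b * ((if c = d then (1:ℝ) else 0) * (v / (2 * m : ℕ)))
        = V a * W b * Ric a b * (v / (2 * m : ℕ)) := by
      intro a b
      have h1 : ∀ c : Fin (2 * m),
          ∑ d, V a * W b * Rm c a d b * ((if c = d then (1:ℝ) else 0) * (v / (2 * m : ℕ)))
          = V a * W b * Rm c a c b * (v / (2 * m : ℕ)) := by
        intro c
        simp only [mul_ite, ite_mul, mul_zero, zero_mul, mul_one, one_mul,
          Finset.sum_ite_eq, Finset.sum_ite_eq', Finset.mem_univ, if_true]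
      rw [Finset.sum_congr rfl fun c _ => h1 c, ← Finset.sum_mul, ← Finset.mul_sum,
        hRmContr a b]
    rw [Finset.sum_congr rfl fun a _ => Finset.sum_congr rfl fun b _ => inner a b]
    simp only [Finset.sum_mul]
  -- RHS algebra
  have hRHS : ∑ a, ∑ b, (Ric a b - 1 / 2 * (∑ c, Ric c c) * (if a = b then 1 else 0))
        * V a * W b
      = (∑ a, ∑ b, V a * W b * Ric a b)
        - 1 / 2 * (∑ c, Ric c c) * (∑ a, V a * W a) := by
    simp only [sub_mul, Finset.sum_sub_distrib, mul_ite, ite_mul, mul_zero, zero_mul,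
      mul_one, one_mul, sum_guard, Finset.sum_ite_eq, Finset.sum_ite_eq',
      Finset.mem_univ, if_true, Finset.mul_sum, Finset.sum_mul]
    congr 1
    · exact Finset.sum_congr rfl fun a _ => Finset.sum_congr rfl fun b _ => by ring
    · exact Finset.sum_congr rfl fun a _ =>
        Finset.sum_congr rfl fun c _ => by ring
  -- symmetrize
  have hQsym : (∑ a, ∑ b, V a * W b * Ric b a) = ∑ a, ∑ b, V a * W b * Ric a b :=
    Finset.sum_congr rfl fun a _ => Finset.sum_congr rfl fun b _ => by rw [hRicSym b a]
  rw [hsplit, hA, hB, hC, hRHS, hQsym]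
  -- final scalar arithmetic
  set P := ∑ a, V a * W a
  set Q := ∑ a, ∑ b, V a * W b * Ric a b
  set R := ∑ c, Ric c c
  have hm0 : (m : ℝ) ≠ 0 := Nat.cast_ne_zero.2 (by omega)
  have hncast : ((2 * m : ℕ) : ℝ) = 2 * m := by push_cast; ring
  rw [hncast]
  have hm1 : (m : ℝ) + 1 ≠ 0 := by positivity
  field_simp
  ring
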